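/- Let G=(V,E) be a single-source acyclic network, ω≥1, and ξ'⊆E any nonempty collection of channels. Then there exists a collection ξ⊆ξ' of channels with C_ξ = |ξ| = min{ω, C_{ξ'}}; in particular, taking l=min{ω,C_{ξ'}}, there exist l channel-disjoint paths from s to ξ', and the set ξ of last channels of these l paths satisfies ξ⊆ξ' and C_ξ=|ξ|=l. -/

import Mathlib

open scoped BigOperators

/-- A single-source finite acyclic directed multigraph with unit-capacity channels.
Acyclicity is witnessed by a rank function compatible with channel adjacency, and the
source node `s` has no incoming channels. -/
structure Network (V : Type*) (E : Type*) where
  tail : E → V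
  head : E → V
  s : V
  no_in_source : ∀ e, head e ≠ s
  rk : E → ℕ
  acyclic : ∀ d e, head d = tail e → rk d < rk e

namespace Network

variable {V : Type*} {E : Type*}

/-- `p` is a nonempty directed path (a list of channels matching head-to-tail). -/
def IsPath (N : Network V E) (p : List E) : Prop :=
  p ≠ [] ∧ p.Chain' fun d e => N.head d = N.tail e

/-- `p` is a nonempty directed path starting at node `u`. -/
def PathFrom (N : Network V E) (p : List E) (u : V) : Prop :=
  N.IsPath p ∧ ∀ e ∈ p.head?, N.tail e = u

variable [Fintype V] [Fintype E] [DecidableEq V] [DecidableEq E]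

/-- `C` is a cut between the source and the collection `T` of nodes: after removing the
channels of `C` no directed path from the source reaches a node of `T`. -/
def IsCutNodes (N : Network V E) (C : Finset E) (T : Finset V) : Prop :=
  ∀ p : List E, N.PathFrom p N.s → (∃ e ∈ p.getLast?, N.head e ∈ T) → ∃ e ∈ p, e ∈ C

/-- The minimum cut capacity between the source and a collection `T` of nodes. -/
noncomputable def minCutNodes (N : Network V E) (T : Finset V) : ℕ :=
  sInf {n | ∃ C : Finset E, N.IsCutNodes C T ∧ C.card = n}

/-- The minimum cut capacity `C_t` between the source and a node `t`. -/
noncomputable def minCutNode (N : Network V E) (t : V) : ℕ :=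
  N.minCutNodes {t}

/-- `C` is a cut between the source and a collection `ξ` of channels (equivalently, a
cut between the source and the new nodes `n_e`, `e ∈ ξ`, in the network obtained by
subdividing every channel of `ξ`): every path from the source whose last channel lies
in `ξ` must meet `C`. -/
def IsCutChans (N : Network V E) (C : Finset E) (ξ : Finset E) : Prop :=
  ∀ p : List E, N.PathFrom p N.s → (∃ e ∈ p.getLast?, e ∈ ξ) → ∃ e ∈ p, e ∈ C

/-- The minimum cut capacity `C_ξ` between the source and a collection `ξ` of channels. -/
noncomputable def minCutChans (N : Network V E) (ξ : Finset E) : ℕ :=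
  sInf {n | ∃ C : Finset E, N.IsCutChans C ξ ∧ C.card = n}

end Network

section Codes

variable {V E : Type*} [Fintype V] [Fintype E] [DecidableEq V] [DecidableEq E]
variable (F : Type*) [Field F]

/-- `f` is the family of global encoding kernels of the `ω`-dimensional linear network
code with local encoding coefficients `k` (between adjacent real channels) and `ks`
(from the `ω` imaginary message channels at the source): the kernels of the imaginary
message channels form the standard basis of `F^ω` and
`f_e = ∑_{d ∈ In(tail e)} k_{d,e} • f_d`. -/
def IsGlobalKernel (N : Network V E) (ω : ℕ) (k : E → E → F) (ks : Fin ω → E → F)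
    (f : E → Fin ω → F) : Prop :=
  ∀ e, f e = (∑ d : E, if N.head d = N.tail e then k d e • f d else 0)
    + ∑ i : Fin ω, (if N.tail e = N.s then ks i e else 0) • (Pi.single i 1 : Fin ω → F)

/-- `f` is the family of extended global encoding kernels (coordinates indexed by
`Fin ω ⊕ E`, i.e. by `In(s) ∪ E`) of the `ω`-dimensional linear network
error-correction code with local encoding coefficients `k`, `ks`:
`f̃_e = ∑_{d ∈ In(tail e)} k_{d,e} • f̃_d + 1_e`. -/
def IsExtKernel (N : Network V E) (ω : ℕ) (k : E → E → F) (ks : Fin ω → E → F)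
    (f : E → (Fin ω ⊕ E) → F) : Prop :=
  ∀ e, f e = (∑ d : E, if N.head d = N.tail e then k d e • f d else 0)
    + (∑ i : Fin ω, (if N.tail e = N.s then ks i e else 0) • (Pi.single (Sum.inl i) 1 : (Fin ω ⊕ E) → F))
    + (Pi.single (Sum.inr e) 1 : (Fin ω ⊕ E) → F)

variable {ω : ℕ}

/-- The row of the decoding matrix `F̃_T` of a collection `T` of nodes indexed by
`d ∈ In(s) ∪ E` (extended by zero outside the coordinates `In(T)`). -/
def rowT (N : Network V E) (f : E → (Fin ω ⊕ E) → F) (T : Finset V)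
    (d : Fin ω ⊕ E) : E → F :=
  fun e => if N.head e ∈ T then f e d else 0

/-- The message space `Φ(T)` of a collection `T` of nodes. -/
def PhiT (N : Network V E) (f : E → (Fin ω ⊕ E) → F) (T : Finset V) :
    Submodule F (E → F) :=
  Submodule.span F (Set.range fun i : Fin ω => rowT F N f T (Sum.inl i))

/-- The error space `Δ(T, ρ)` of an error pattern `ρ` with respect to `T`. -/
def DeltaT (N : Network V E) (f : E → (Fin ω ⊕ E) → F) (T : Finset V)
    (ρ : Finset E) : Submodule F (E → F) :=
  Submodule.span F ((fun e => rowT F N f T (Sum.inr e)) '' (ρ : Set E))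

/-- The minimum distance `d_min^{(T)}` at a collection `T` of nodes. -/
noncomputable def dminT (N : Network V E) (f : E → (Fin ω ⊕ E) → F) (T : Finset V) : ℕ :=
  sInf {n | ∃ ρ : Finset E, ρ.card = n ∧ DeltaT F N f T ρ ⊓ PhiT F N f T ≠ ⊥}

/-- `ρ₁ ≺_T ρ₂` : `Δ(T,ρ₁) ⊆ Δ(T,ρ₂)` for every `ω`-dimensional `F`-valued LNEC code
on the network. -/
def DominatesT (N : Network V E) (ω : ℕ) (T : Finset V) (ρ₁ ρ₂ : Finset E) : Prop :=
  ∀ (k : E → E → F) (ks : Fin ω → E → F) (f : E → (Fin ω ⊕ E) → F),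
    IsExtKernel F N ω k ks f → DeltaT F N f T ρ₁ ≤ DeltaT F N f T ρ₂

/-- `rank_T(ρ)`, the rank of an error pattern with respect to `T`. -/
noncomputable def rankT (N : Network V E) (ω : ℕ) (T : Finset V) (ρ : Finset E) : ℕ :=
  sInf {n | ∃ ρ' : Finset E, DominatesT F N ω T ρ ρ' ∧ ρ'.card = n}

/-- The row of the decoding matrix `F̃_ξ` of a collection `ξ` of channels indexed by
`d ∈ In(s) ∪ E` (extended by zero outside the coordinates `ξ`). -/
def rowX (N : Network V E) (f : E → (Fin ω ⊕ E) → F) (ξ : Finset E)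
    (d : Fin ω ⊕ E) : E → F :=
  fun e => if e ∈ ξ then f e d else 0

/-- The message space `Φ(ξ)` of a collection `ξ` of channels. -/
def PhiX (N : Network V E) (f : E → (Fin ω ⊕ E) → F) (ξ : Finset E) :
    Submodule F (E → F) :=
  Submodule.span F (Set.range fun i : Fin ω => rowX F N f ξ (Sum.inl i))

/-- The error space `Δ(ξ, ρ)` of an error pattern `ρ` with respect to `ξ`. -/
def DeltaX (N : Network V E) (f : E → (Fin ω ⊕ E) → F) (ξ : Finset E)
    (ρ : Finset E) : Submodule F (E → F) :=
  Submodule.span F ((fun e => rowX F N f ξ (Sum.inr e)) '' (ρ : Set E))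

/-- The minimum distance `d_min^{(ξ)}` at a collection `ξ` of channels. -/
noncomputable def dminX (N : Network V E) (f : E → (Fin ω ⊕ E) → F) (ξ : Finset E) : ℕ :=
  sInf {n | ∃ ρ : Finset E, ρ.card = n ∧ DeltaX F N f ξ ρ ⊓ PhiX F N f ξ ≠ ⊥}

/-- `ρ₁ ≺_ξ ρ₂` : `Δ(ξ,ρ₁) ⊆ Δ(ξ,ρ₂)` for every `ω`-dimensional `F`-valued LNEC code
on the network. -/
def DominatesX (N : Network V E) (ω : ℕ) (ξ : Finset E) (ρ₁ ρ₂ : Finset E) : Prop :=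
  ∀ (k : E → E → F) (ks : Fin ω → E → F) (f : E → (Fin ω ⊕ E) → F),
    IsExtKernel F N ω k ks f → DeltaX F N f ξ ρ₁ ≤ DeltaX F N f ξ ρ₂

/-- `rank_ξ(ρ)`, the rank of an error pattern with respect to `ξ`. -/
noncomputable def rankX (N : Network V E) (ω : ℕ) (ξ : Finset E) (ρ : Finset E) : ℕ :=
  sInf {n | ∃ ρ' : Finset E, DominatesX F N ω ξ ρ ρ' ∧ ρ'.card = n}

/-- Regular LNEC code: `dim Φ(t) = ω` for every non-source node with `C_t ≥ ω`. -/
def Regular (N : Network V E) (f : E → (Fin ω ⊕ E) → F) : Prop :=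
  ∀ t : V, t ≠ N.s → ω ≤ N.minCutNode t →
    Module.finrank F (PhiT F N f ({t} : Finset V)) = ω

/-- Strongly regular LNEC code: `dim Φ(t) = min{ω, C_t}` for every non-source node. -/
def StronglyRegular (N : Network V E) (f : E → (Fin ω ⊕ E) → F) : Prop :=
  ∀ t : V, t ≠ N.s →
    Module.finrank F (PhiT F N f ({t} : Finset V)) = min ω (N.minCutNode t)

/-- Strongly sup-regular LNEC code: `dim Φ(T) = min{ω, C_T}` for every nonempty
collection of non-source nodes. -/
def StronglySupRegular (N : Network V E) (f : E → (Fin ω ⊕ E) → F) : Prop :=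
  ∀ T : Finset V, T.Nonempty → N.s ∉ T →
    Module.finrank F (PhiT F N f T) = min ω (N.minCutNodes T)

/-- Channel-regular LNEC code: `dim Φ(ξ) = min{ω, C_ξ}` for every nonempty collection
of channels. -/
def ChannelRegular (N : Network V E) (f : E → (Fin ω ⊕ E) → F) : Prop :=
  ∀ ξ : Finset E, ξ.Nonempty →
    Module.finrank F (PhiX F N f ξ) = min ω (N.minCutChans ξ)

/-- LNEC multicast MDS code. -/
def IsMulticastMDS (N : Network V E) (f : E → (Fin ω ⊕ E) → F) : Prop :=
  Regular F N f ∧ ∀ t : V, t ≠ N.s → ω ≤ N.minCutNode t →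
    dminT F N f {t} = N.minCutNode t - ω + 1

/-- LNEC broadcast MDS code. -/
def IsBroadcastMDS (N : Network V E) (f : E → (Fin ω ⊕ E) → F) : Prop :=
  StronglyRegular F N f ∧ ∀ t : V, t ≠ N.s →
    (ω ≤ N.minCutNode t → dminT F N f {t} = N.minCutNode t - ω + 1) ∧
    (N.minCutNode t < ω → dminT F N f {t} = 1)

/-- LNEC dispersion MDS code. -/
def IsDispersionMDS (N : Network V E) (f : E → (Fin ω ⊕ E) → F) : Prop :=
  StronglySupRegular F N f ∧ ∀ T : Finset V, T.Nonempty → N.s ∉ T →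
    (ω ≤ N.minCutNodes T → dminT F N f T = N.minCutNodes T - ω + 1) ∧
    (N.minCutNodes T < ω → dminT F N f T = 1)

/-- LNEC generic MDS code. -/
def IsGenericMDS (N : Network V E) (f : E → (Fin ω ⊕ E) → F) : Prop :=
  ChannelRegular F N f ∧ ∀ ξ : Finset E, ξ.Nonempty →
    (ω ≤ N.minCutChans ξ → dminX F N f ξ = N.minCutChans ξ - ω + 1) ∧
    (N.minCutChans ξ < ω → dminX F N f ξ = 1)

/-- `R_t(δ_t)`: the set of error patterns `ρ` with `|ρ| = rank_t(ρ) = δ_t`. -/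
def Rset (N : Network V E) (ω : ℕ) (t : V) : Set (Finset E) :=
  {ρ | ρ.card = N.minCutNode t - ω ∧ rankT F N ω ({t} : Finset V) ρ = N.minCutNode t - ω}

end Codes

namespace MengerAux

open List

variable {E : Type*} [DecidableEq E]

def Rel (S : Finset (E × E)) (a b : E) : Prop := (a, b) ∈ S

def APath (S : Finset (E × E)) (A : E → Prop) (p : List E) : Prop :=
  p ≠ [] ∧ p.Chain' (Rel S) ∧ ∀ e ∈ p.head?, A e

def IsCut (S : Finset (E × E)) (A : E → Prop) (B C : Finset E) : Prop :=
  ∀ p : List E, APath S A p → (∃ e ∈ p.getLast?, e ∈ B) → ∃ e ∈ p, e ∈ C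

/-- From a chain meeting `Y`, extract a prefix ending at its first `Y`-element which is
moreover a chain for a subrelation `R'` (assuming `R` implies `R'` off `Y`). -/
lemma prefix_to_first {R R' : E → E → Prop} {Y : Finset E}
    (hRR' : ∀ a b, R a b → a ∉ Y → R' a b) :
    ∀ p : List E, p.Chain' R → (∃ e ∈ p, e ∈ Y) →
    ∃ q c, q <+: p ∧ q ≠ [] ∧ q.Chain' R' ∧ q.head? = p.head? ∧
      q.getLast? = some c ∧ c ∈ Y ∧ ∀ e ∈ q.dropLast, e ∉ Y := by
  intro p
  induction p with
  | nil => rintro _ ⟨e, he, _⟩; exact absurd he (by simp)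
  | cons a rest ih =>
    intro hch hmem
    by_cases haY : a ∈ Y
    · exact ⟨[a], a, ⟨rest, rfl⟩, by simp, isChain_singleton a, rfl, rfl, haY, by simp⟩
    · obtain ⟨e, he, heY⟩ := hmem
      have herest : e ∈ rest := by
        rcases mem_cons.mp he with rfl | h
        · exact absurd heY haY
        · exact h
      match rest, herest with
      | b :: t, herest =>
        obtain ⟨hab, hch'⟩ := isChain_cons_cons.mp hch
        obtain ⟨q, c, hpre, hne, hqch, hqhead, hqlast, hcY, hdl⟩ :=
          ih hch' ⟨e, herest, heY⟩
        refine ⟨a :: q, c, ?_, by simp, ?_, rfl, ?_, hcY, ?_⟩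
        · obtain ⟨r, hr⟩ := hpre; exact ⟨r, by rw [cons_append, hr]⟩
        · refine isChain_cons.mpr ⟨?_, hqch⟩
          intro z hz
          have hz' : b = z := by
            rw [hqhead] at hz
            simpa using hz
          have : z = b := hz'.symm
          subst this
          exact hRR' a z hab haY
        · match q, hne with
          | c0 :: q', _ => simpa using hqlast
        · match q, hne with
          | c0 :: q', _ =>
            intro x hx
            rw [dropLast_cons₂] at hx
            rcases mem_cons.mp hx with rfl | hx
            · exact haY
            · exact hdl x hx


/-- Suffix version: from a chain meeting `Z`, extract a suffix starting at its last
`Z`-element. -/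
lemma suffix_from_last {R R' : E → E → Prop} {Z : Finset E}
    (hRR' : ∀ a b, R a b → b ∉ Z → R' a b) :
    ∀ p : List E, p.Chain' R → (∃ e ∈ p, e ∈ Z) →
    ∃ q z, q <:+ p ∧ q ≠ [] ∧ q.Chain' R' ∧ q.getLast? = p.getLast? ∧
      q.head? = some z ∧ z ∈ Z ∧ ∀ e ∈ q.tail, e ∉ Z := by
  intro p hch hmem
  have hch' : p.reverse.Chain' (flip R) := by
    show List.IsChain _ _
    rw [List.isChain_reverse]
    exact hch
  obtain ⟨q0, z, hpre, hne, hq0ch, hq0head, hq0last, hzZ, hdl⟩ :=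
    prefix_to_first (R := flip R) (R' := flip R') (Y := Z)
      (fun a b hab ha => hRR' b a hab ha) p.reverse hch' (by simpa using hmem)
  refine ⟨q0.reverse, z, ?_, by simpa using hne, ?_, ?_, ?_, hzZ, ?_⟩
  · have h2 : q0.reverse.reverse <+: p.reverse := by
      rw [List.reverse_reverse]; exact hpre
    exact (List.reverse_prefix).1 h2
  · show List.IsChain _ _
    rw [List.isChain_reverse]
    exact hq0ch
  · rw [List.getLast?_reverse, hq0head, List.head?_reverse]
  · rw [List.head?_reverse, hq0last]
  · intro e hedl
    rw [List.tail_reverse] at hedl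
    exact hdl e (by simpa using hedl)


lemma chain_pairwise {R : E → E → Prop} {rk : E → ℕ} (h : ∀ a b, R a b → rk a < rk b)
    {p : List E} (hp : p.Chain' R) : p.Pairwise (fun a b => rk a < rk b) := by
  haveI : IsTrans E (fun a b => rk a < rk b) := ⟨fun _ _ _ => lt_trans⟩
  haveI : Trans (fun a b : E => rk a < rk b) (fun a b : E => rk a < rk b)
    (fun a b : E => rk a < rk b) := ⟨lt_trans⟩
  exact List.isChain_iff_pairwise.mp (hp.imp h)

lemma mem_of_not_chain' {S : Finset (E × E)} {x y : E} :
    ∀ p : List E, p.Chain' (Rel S) → ¬ p.Chain' (Rel (S.erase (x, y))) →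
      x ∈ p ∧ y ∈ p := by
  intro p
  induction p with
  | nil => intro _ h; exact absurd List.isChain_nil h
  | cons a rest ih =>
    intro hch hnch
    match rest with
    | [] => exact absurd (List.isChain_singleton a) hnch
    | b :: t =>
      obtain ⟨hab, hch'⟩ := List.isChain_cons_cons.mp hch
      by_cases hab' : (a, b) = (x, y)
      · obtain ⟨rfl, rfl⟩ := Prod.mk.injEq .. ▸ hab'
        exact ⟨by simp, by simp⟩
      · have : Rel (S.erase (x, y)) a b := Finset.mem_erase.mpr ⟨hab', hab⟩
        have hnch' : ¬ (b :: t).Chain' (Rel (S.erase (x, y))) := by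
          intro hc
          exact hnch (List.isChain_cons_cons.mpr ⟨this, hc⟩)
        obtain ⟨hx, hy⟩ := ih hch' hnch'
        exact ⟨List.mem_cons_of_mem a hx, List.mem_cons_of_mem a hy⟩


/-- Crossing lemma: a trimmed source-side path `P` (meeting `Y = insert x C'` only at
its last element `c`) and a trimmed sink-side path `Q` (meeting `Z = insert y C'` only
at its first element `z`) can only meet at `v = c = z`. -/
lemma cross {S : Finset (E × E)} {rk : E → ℕ} (hrk : ∀ p ∈ S, rk p.1 < rk p.2)
    {x y : E} (hxy : (x, y) ∈ S) {C' : Finset E} (hxC' : x ∉ C')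
    {A : E → Prop} {B : Finset E}
    (claimY : IsCut S A B (insert x C')) (claimZ : IsCut S A B (insert y C'))
    {P Q : List E} {c z v : E}
    (hPch : P.Chain' (Rel (S.erase (x, y)))) (hPA : ∀ e ∈ P.head?, A e)
    (hPlast : P.getLast? = some c) (hcY : c ∈ insert x C')
    (hPdl : ∀ e ∈ P.dropLast, e ∉ insert x C')
    (hQch : Q.Chain' (Rel (S.erase (x, y)))) (hQhead : Q.head? = some z)
    (hQlast : ∃ b ∈ Q.getLast?, b ∈ B)
    (hQtl : ∀ e ∈ Q.tail, e ∉ insert y C')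
    (hvP : v ∈ P) (hvQ : v ∈ Q) : v = c ∧ v = z := by
  have hrk' : ∀ a b : E, Rel (S.erase (x, y)) a b → rk a < rk b :=
    fun a b hab => hrk (a, b) (Finset.mem_of_mem_erase hab)
  have hrkS : ∀ a b : E, Rel S a b → rk a < rk b := fun a b hab => hrk (a, b) hab
  have hrkxy : rk x < rk y := hrk (x, y) hxy
  have hxny : x ≠ y := fun h => absurd (h ▸ hrkxy) (lt_irrefl _)
  -- membership characterizations
  have hPY : ∀ e ∈ P, e ∈ insert x C' → e = c := by
    intro e heP heY
    have hPd : P.dropLast ++ [c] = P := List.dropLast_append_getLast? c hPlast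
    rw [← hPd] at heP
    rcases List.mem_append.mp heP with h | h
    · exact absurd heY (hPdl e h)
    · simpa using h
  have hQne : Q ≠ [] := by intro h; rw [h] at hQhead; simp at hQhead
  have hQcons : Q = z :: Q.tail := by
    have h := List.cons_head_tail hQne
    rw [List.head?_eq_head hQne, Option.some_inj] at hQhead
    rw [← hQhead]
    exact h.symm
  have hQZ : ∀ e ∈ Q, e ∈ insert y C' → e = z := by
    intro e heQ heZ
    rw [hQcons] at heQ
    rcases List.mem_cons.mp heQ with h | h
    · exact h
    · exact absurd heZ (hQtl e h)
  -- decompositions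
  obtain ⟨u, w, hPdec⟩ := List.append_of_mem hvP
  obtain ⟨u', w', hQdec⟩ := List.append_of_mem hvQ
  -- pairwise rank facts
  have hPpw : P.Pairwise (fun a b => rk a < rk b) := chain_pairwise hrk' hPch
  have hQpw : Q.Pairwise (fun a b => rk a < rk b) := chain_pairwise hrk' hQch
  rw [hPdec] at hPpw
  rw [hQdec] at hQpw
  obtain ⟨-, hPpw2, hPcross⟩ := List.pairwise_append.mp hPpw
  obtain ⟨-, hQpw2, hQcross⟩ := List.pairwise_append.mp hQpw
  have hQvw : ∀ b ∈ w', rk v < rk b := (List.pairwise_cons.mp hQpw2).1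
  -- c is in v :: w
  have hcvw : c ∈ v :: w := by
    have h1 : (v :: w).getLast? = some c := by
      rw [hPdec, List.getLast?_append] at hPlast
      rw [List.getLast?_eq_getLast_of_ne_nil (l := v :: w) (by simp)] at hPlast ⊢
      simpa using hPlast
    rw [List.getLast?_eq_getLast_of_ne_nil (l := v :: w) (by simp), Option.some_inj] at h1
    rw [← h1]
    exact List.getLast_mem _
  -- if some element of u ++ [v] is in Y then v = c
  have hE1 : ∀ e, e ∈ u ++ [v] → e ∈ insert x C' → v = c := by
    intro e he heY
    have heP : e ∈ P := by
      rw [hPdec]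
      rcases List.mem_append.mp he with h | h
      · exact List.mem_append_left _ h
      · simp at h; subst h; simp
    have hec : e = c := hPY e heP heY
    subst hec
    rcases List.mem_append.mp he with h | h
    · exact absurd (hPcross e h e hcvw) (lt_irrefl _)
    · simp only [List.mem_singleton] at h
      exact h.symm
  -- build the crossing path p'
  set p' : List E := (u ++ [v]) ++ w' with hp'def
  have hc1 : (u ++ [v]).Chain' (Rel S) := by
    have : P.Chain' (Rel S) := hPch.imp (fun a b hab => Finset.mem_of_mem_erase hab)
    exact this.prefix (by rw [hPdec]; exact ⟨w, by simp⟩)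
  have hQchS : Q.Chain' (Rel S) := hQch.imp (fun a b hab => Finset.mem_of_mem_erase hab)
  have hvw'ch : (v :: w').Chain' (Rel S) := hQchS.suffix ⟨u', by rw [hQdec]⟩
  have hc2 : w'.Chain' (Rel S) := (List.isChain_cons.mp hvw'ch).2
  have hjunction : ∀ a ∈ (u ++ [v]).getLast?, ∀ b ∈ w'.head?, Rel S a b := by
    intro a ha b hb
    rw [List.getLast?_concat] at ha
    simp at ha; subst ha
    exact (List.isChain_cons.mp hvw'ch).1 b hb
  have hp'ch : p'.Chain' (Rel S) := hc1.append hc2 hjunction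
  have hp'ne : p' ≠ [] := by simp [hp'def]
  have hp'head : p'.head? = P.head? := by
    rw [hPdec, hp'def]
    cases u <;> simp
  have hp'last : p'.getLast? = Q.getLast? := by
    have hQre : Q = (u' ++ [v]) ++ w' := by rw [hQdec]; simp
    rw [hp'def, hQre]
    have hvw : (v :: w').getLast? = some ((v :: w').getLast (by simp)) :=
      List.getLast?_eq_getLast_of_ne_nil _
    simp [List.getLast?_append, hvw, Option.or_some]
  have hp'path : APath S A p' := ⟨hp'ne, hp'ch, by rw [hp'head]; exact hPA⟩
  have hp'B : ∃ e ∈ p'.getLast?, e ∈ B := by rw [hp'last]; exact hQlast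
  obtain ⟨e₁, he₁, he₁Y⟩ := claimY p' hp'path hp'B
  obtain ⟨e₂, he₂, he₂Z⟩ := claimZ p' hp'path hp'B
  have hw'tail : ∀ e ∈ w', e ∈ Q.tail := by
    intro e he
    rcases u' with _ | ⟨a, u''⟩
    · rw [hQdec]; simpa using he
    · rw [hQdec]
      simp only [List.cons_append, List.tail_cons]
      exact List.mem_append_right _ (List.mem_cons_of_mem v he)
  -- main argument
  have hvc : v = c := by
    by_contra hvc
    -- e₁ ∈ Y forces x ∈ w'
    have hxw' : x ∈ w' := by
      rcases List.mem_append.mp he₁ with h | h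
      · exact absurd (hE1 e₁ h he₁Y) hvc
      · rcases Finset.mem_insert.mp he₁Y with rfl | hC
        · exact h
        · exact absurd (Finset.mem_insert_of_mem hC) (hQtl e₁ (hw'tail e₁ h))
    -- e₂ ∈ Z forces y ∈ u ++ [v]
    have hyuv : y ∈ u ++ [v] := by
      rcases List.mem_append.mp he₂ with h | h
      · rcases Finset.mem_insert.mp he₂Z with rfl | hC
        · exact h
        · exact absurd (hE1 e₂ h (Finset.mem_insert_of_mem hC)) hvc
      · exact absurd he₂Z (hQtl e₂ (hw'tail e₂ h))
    have h1 : rk y ≤ rk v := by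
      rcases List.mem_append.mp hyuv with h | h
      · exact le_of_lt (hPcross y h v (by simp))
      · simp at h; subst h; exact le_rfl
    have h2 : rk v < rk x := hQvw x hxw'
    omega
  refine ⟨hvc, ?_⟩
  by_cases hcC' : c ∈ C'
  · exact hQZ v hvQ (hvc ▸ Finset.mem_insert_of_mem hcC')
  · have hcx : c = x := by
      rcases Finset.mem_insert.mp hcY with h | h
      · exact h
      · exact absurd h hcC'
    exfalso
    have hyuv : y ∈ u ++ [v] := by
      rcases List.mem_append.mp he₂ with h | h
      · rcases Finset.mem_insert.mp he₂Z with rfl | hC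
        · exact h
        · exfalso
          have heP : e₂ ∈ P := by
            rw [hPdec]
            rcases List.mem_append.mp h with h' | h'
            · exact List.mem_append_left _ h'
            · simp only [List.mem_singleton] at h'; subst h'; simp
          have he2c : e₂ = c := hPY e₂ heP (Finset.mem_insert_of_mem hC)
          rw [he2c, hcx] at hC
          exact hxC' hC
      · exact absurd he₂Z (hQtl e₂ (hw'tail e₂ h))
    have hyu : y ∈ u := by
      rcases List.mem_append.mp hyuv with h | h
      · exact h
      · exfalso
        simp only [List.mem_singleton] at h
        exact hxny ((h.trans hvc).trans hcx).symm
    have : rk y < rk v := hPcross y hyu v (by simp)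
    rw [hvc, hcx] at this
    omega


lemma mem_of_last : ∀ (l : List E) (c : E), l.getLast? = some c → c ∈ l := by
  intro l c h
  have hne : l ≠ [] := by intro h'; rw [h'] at h; simp at h
  rw [List.getLast?_eq_getLast_of_ne_nil hne, Option.some_inj] at h
  rw [← h]
  exact List.getLast_mem _

lemma menger [Fintype E] (rk : E → ℕ) :
    ∀ S : Finset (E × E), (∀ p ∈ S, rk p.1 < rk p.2) →
    ∀ (A : E → Prop) (B : Finset E) (n : ℕ),
    (∀ C : Finset E, IsCut S A B C → n ≤ C.card) →
    ∃ P : Fin n → List E,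
      (∀ i, APath S A (P i) ∧ ∃ c, (P i).getLast? = some c ∧ c ∈ B) ∧
      (∀ i j, i ≠ j → ∀ e, e ∈ P i → e ∉ P j) := by
  classical
  intro S
  induction S using Finset.strongInductionOn with
  | _ S IH =>
  intro hrk A B n hn
  rcases S.eq_empty_or_nonempty with rfl | hSne
  · -- base case : no edges, paths are singletons
    have hWcut : IsCut (∅ : Finset (E × E)) A B (B.filter (fun e => A e)) := by
      intro p hp hB
      obtain ⟨hne, hch, hA⟩ := hp
      match p, hne with
      | [a], _ =>
        obtain ⟨e, he, heB⟩ := hB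
        have hea : e = a := (by simpa using he : a = e).symm
        subst hea
        exact ⟨e, by simp, Finset.mem_filter.mpr ⟨heB, hA e (by simp)⟩⟩
      | a :: b :: t, _ =>
        obtain ⟨hab, -⟩ := List.isChain_cons_cons.mp hch
        exact absurd hab (by simp [Rel])
    have hWn : n ≤ (B.filter (fun e => A e)).card := hn _ hWcut
    obtain ⟨T, hT, hTcard⟩ := Finset.exists_subset_card_eq hWn
    let eqv := Finset.equivFinOfCardEq hTcard
    refine ⟨fun i => [((eqv.symm i : T) : E)], fun i => ?_, fun i j hij e hei hej => ?_⟩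
    · have hmem : ((eqv.symm i : T) : E) ∈ B.filter (fun e => A e) := hT (eqv.symm i).2
      refine ⟨⟨by simp, List.isChain_singleton _, ?_⟩, ?_⟩
      · intro e he
        have : e = ((eqv.symm i : T) : E) := (by simpa using he : _ = e).symm
        rw [this]
        exact (Finset.mem_filter.mp hmem).2
      · exact ⟨_, by simp, (Finset.mem_filter.mp hmem).1⟩
    · have h1 : e = ((eqv.symm i : T) : E) := by simpa using hei
      have h2 : e = ((eqv.symm j : T) : E) := by simpa using hej
      have : eqv.symm i = eqv.symm j := Subtype.ext (h1 ▸ h2 ▸ rfl)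
      exact hij (eqv.symm.injective this)
  · -- inductive step
    obtain ⟨⟨x, y⟩, hxy⟩ := hSne
    have hS'ss : S.erase (x, y) ⊂ S := Finset.erase_ssubset hxy
    have hrk' : ∀ p ∈ S.erase (x, y), rk p.1 < rk p.2 :=
      fun p hp => hrk p (Finset.mem_of_mem_erase hp)
    have hrkxy : rk x < rk y := hrk (x, y) hxy
    have hxny : x ≠ y := fun h => absurd (h ▸ hrkxy) (lt_irrefl _)
    by_cases hcase : ∀ C : Finset E, IsCut (S.erase (x, y)) A B C → n ≤ C.card
    · obtain ⟨P, h1, h2⟩ := IH _ hS'ss hrk' A B n hcase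
      refine ⟨P, fun i => ⟨⟨(h1 i).1.1,
        (h1 i).1.2.1.imp (fun a b hab => Finset.mem_of_mem_erase hab), (h1 i).1.2.2⟩,
        (h1 i).2⟩, h2⟩
    · push_neg at hcase
      obtain ⟨C', hC'cut, hC'lt⟩ := hcase
      have claimY : IsCut S A B (insert x C') := by
        intro p hp hB
        by_cases hch' : p.Chain' (Rel (S.erase (x, y)))
        · obtain ⟨e, he, heC⟩ := hC'cut p ⟨hp.1, hch', hp.2.2⟩ hB
          exact ⟨e, he, Finset.mem_insert_of_mem heC⟩
        · obtain ⟨hxp, -⟩ := mem_of_not_chain' p hp.2.1 hch'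
          exact ⟨x, hxp, Finset.mem_insert_self _ _⟩
      have claimZ : IsCut S A B (insert y C') := by
        intro p hp hB
        by_cases hch' : p.Chain' (Rel (S.erase (x, y)))
        · obtain ⟨e, he, heC⟩ := hC'cut p ⟨hp.1, hch', hp.2.2⟩ hB
          exact ⟨e, he, Finset.mem_insert_of_mem heC⟩
        · obtain ⟨-, hyp⟩ := mem_of_not_chain' p hp.2.1 hch'
          exact ⟨y, hyp, Finset.mem_insert_self _ _⟩
      have hYn : n ≤ (insert x C').card := hn _ claimY
      have hZn : n ≤ (insert y C').card := hn _ claimZ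
      have hxC' : x ∉ C' := by
        intro hx
        rw [Finset.insert_eq_self.mpr hx] at hYn
        omega
      have hyC' : y ∉ C' := by
        intro hy
        rw [Finset.insert_eq_self.mpr hy] at hZn
        omega
      have hYcard : (insert x C').card = n := by
        rw [Finset.card_insert_of_notMem hxC'] at hYn ⊢
        omega
      have hZcard : (insert y C').card = n := by
        rw [Finset.card_insert_of_notMem hyC'] at hZn ⊢
        omega
      have hYhyp : ∀ a b : E, Rel S a b → a ∉ insert x C' → Rel (S.erase (x, y)) a b := by
        intro a b hab ha
        refine Finset.mem_erase.mpr ⟨?_, hab⟩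
        intro h
        rw [Prod.mk.injEq] at h
        exact ha (by rw [h.1]; exact Finset.mem_insert_self _ _)
      have hZhyp : ∀ a b : E, Rel S a b → b ∉ insert y C' → Rel (S.erase (x, y)) a b := by
        intro a b hab hb
        refine Finset.mem_erase.mpr ⟨?_, hab⟩
        intro h
        rw [Prod.mk.injEq] at h
        exact hb (by rw [h.2]; exact Finset.mem_insert_self _ _)
      have cutAY : ∀ D : Finset E, IsCut (S.erase (x, y)) A (insert x C') D → n ≤ D.card := by
        intro D hD
        apply hn
        intro p hp hB
        obtain ⟨v, hv, hvY⟩ := claimY p hp hB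
        obtain ⟨q, c, hpre, hqne, hqch, hqhead, hqlast, hcY, hdl⟩ :=
          prefix_to_first hYhyp p hp.2.1 ⟨v, hv, hvY⟩
        obtain ⟨e, he, heD⟩ := hD q ⟨hqne, hqch, by rw [hqhead]; exact hp.2.2⟩
          ⟨c, by rw [hqlast]; rfl, hcY⟩
        exact ⟨e, hpre.subset he, heD⟩
      have cutZB : ∀ D : Finset E, IsCut (S.erase (x, y)) (· ∈ insert y C') B D → n ≤ D.card := by
        intro D hD
        apply hn
        intro p hp hB
        obtain ⟨v, hv, hvZ⟩ := claimZ p hp hB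
        obtain ⟨q, z, hsuf, hqne, hqch, hqlast, hqhead, hzZ, htl⟩ :=
          suffix_from_last hZhyp p hp.2.1 ⟨v, hv, hvZ⟩
        obtain ⟨e, he, heD⟩ := hD q
          ⟨hqne, hqch, by
            intro e' he'
            rw [hqhead] at he'
            have hez : e' = z := (by simpa using he' : z = e').symm
            rw [hez]; exact hzZ⟩
          (by rw [hqlast]; exact hB)
        exact ⟨e, hsuf.subset he, heD⟩
      obtain ⟨Pa, hPa1, hPa2⟩ := IH _ hS'ss hrk' A (insert x C') n cutAY
      obtain ⟨Pb, hPb1, hPb2⟩ := IH _ hS'ss hrk' (· ∈ insert y C') B n cutZB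
      -- trim the source-side paths at their first Y-element
      have trimA : ∀ i : Fin n, ∃ q c, q <+: Pa i ∧ q ≠ [] ∧ q.Chain' (Rel (S.erase (x, y))) ∧
          (∀ e ∈ q.head?, A e) ∧ q.getLast? = some c ∧ c ∈ insert x C' ∧
          ∀ e ∈ q.dropLast, e ∉ insert x C' := by
        intro i
        obtain ⟨⟨hne, hch, hA⟩, c0, hlast0, hc0⟩ := hPa1 i
        obtain ⟨q, c, h1, h2, h3, h4, h5, h6, h7⟩ :=
          prefix_to_first (R := Rel (S.erase (x, y))) (R' := Rel (S.erase (x, y)))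
            (fun a b hab _ => hab) (Pa i) hch ⟨c0, mem_of_last _ _ hlast0, hc0⟩
        exact ⟨q, c, h1, h2, h3, by rw [h4]; exact hA, h5, h6, h7⟩
      choose Qa ca hQa_pre hQa_ne hQa_ch hQa_A hQa_last hQa_Y hQa_dl using trimA
      -- trim the sink-side paths at their last Z-element
      have trimB : ∀ i : Fin n, ∃ q z, q <:+ Pb i ∧ q ≠ [] ∧ q.Chain' (Rel (S.erase (x, y))) ∧
          (∃ c0, q.getLast? = some c0 ∧ c0 ∈ B) ∧ q.head? = some z ∧ z ∈ insert y C' ∧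
          ∀ e ∈ q.tail, e ∉ insert y C' := by
        intro i
        obtain ⟨⟨hne, hch, hA⟩, c0, hlast0, hc0⟩ := hPb1 i
        have hz0 : ∃ e ∈ Pb i, e ∈ insert y C' :=
          ⟨(Pb i).head hne, List.head_mem hne, hA _ (List.head?_eq_head hne)⟩
        obtain ⟨q, z, h1, h2, h3, h4, h5, h6, h7⟩ :=
          suffix_from_last (R := Rel (S.erase (x, y))) (R' := Rel (S.erase (x, y)))
            (fun a b hab _ => hab) (Pb i) hch hz0
        exact ⟨q, z, h1, h2, h3, ⟨c0, by rw [h4]; exact hlast0, hc0⟩, h5, h6, h7⟩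
      choose Qb zb hQb_suf hQb_ne hQb_ch hQb_B hQb_head hQb_Z hQb_tl using trimB
      -- endpoints of trimmed paths biject onto Y resp. Z
      have hca_mem : ∀ i, ca i ∈ Qa i := fun i => mem_of_last _ _ (hQa_last i)
      have hQa_disj : ∀ i j, i ≠ j → ∀ e, e ∈ Qa i → e ∉ Qa j :=
        fun i j hij e hei hej => hPa2 i j hij e ((hQa_pre i).subset hei) ((hQa_pre j).subset hej)
      have hca_inj : Function.Injective ca := by
        intro i j hij
        by_contra hne
        exact hQa_disj i j hne (ca i) (hca_mem i) (hij ▸ hca_mem j)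
      have hca_surj : ∀ w ∈ insert x C', ∃ i, ca i = w := by
        have himg : Finset.image ca Finset.univ = insert x C' := by
          apply Finset.eq_of_subset_of_card_le
          · intro w hw
            obtain ⟨i, -, rfl⟩ := Finset.mem_image.mp hw
            exact hQa_Y i
          · rw [Finset.card_image_of_injective _ hca_inj, Finset.card_univ,
              Fintype.card_fin, hYcard]
        intro w hw
        rw [← himg] at hw
        obtain ⟨i, -, h⟩ := Finset.mem_image.mp hw
        exact ⟨i, h⟩
      have hzb_mem : ∀ i, zb i ∈ Qb i := by
        intro i
        have h := hQb_head i
        have hne := hQb_ne i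
        rw [List.head?_eq_head hne, Option.some_inj] at h
        rw [← h]
        exact List.head_mem hne
      have hQb_disj : ∀ i j, i ≠ j → ∀ e, e ∈ Qb i → e ∉ Qb j :=
        fun i j hij e hei hej => hPb2 i j hij e ((hQb_suf i).subset hei) ((hQb_suf j).subset hej)
      have hzb_inj : Function.Injective zb := by
        intro i j hij
        by_contra hne
        exact hQb_disj i j hne (zb i) (hzb_mem i) (hij ▸ hzb_mem j)
      have hzb_surj : ∀ w ∈ insert y C', ∃ i, zb i = w := by
        have himg : Finset.image zb Finset.univ = insert y C' := by
          apply Finset.eq_of_subset_of_card_le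
          · intro w hw
            obtain ⟨i, -, rfl⟩ := Finset.mem_image.mp hw
            exact hQb_Z i
          · rw [Finset.card_image_of_injective _ hzb_inj, Finset.card_univ,
              Fintype.card_fin, hZcard]
        intro w hw
        rw [← himg] at hw
        obtain ⟨i, -, h⟩ := Finset.mem_image.mp hw
        exact ⟨i, h⟩
      -- match each source-side endpoint with a sink-side start
      have hmatch : ∀ i : Fin n, ∃ j : Fin n, zb j = (if ca i = x then y else ca i) := by
        intro i
        apply hzb_surj
        by_cases h : ca i = x
        · rw [if_pos h]
          exact Finset.mem_insert_self _ _
        · rw [if_neg h]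
          rcases Finset.mem_insert.mp (hQa_Y i) with h' | h'
          · exact absurd h' h
          · exact Finset.mem_insert_of_mem h'
      choose jb hjb using hmatch
      have hjb_inj : Function.Injective jb := by
        intro i i' hjj
        have h : (if ca i = x then y else ca i) = (if ca i' = x then y else ca i') := by
          rw [← hjb i, ← hjb i', hjj]
        apply hca_inj
        by_cases h1 : ca i = x <;> by_cases h2 : ca i' = x
        · rw [h1, h2]
        · rw [if_pos h1, if_neg h2] at h
          exfalso
          rcases Finset.mem_insert.mp (hQa_Y i') with h' | h'
          · exact h2 h'
          · rw [← h] at h'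
            exact hyC' h'
        · rw [if_neg h1, if_pos h2] at h
          exfalso
          rcases Finset.mem_insert.mp (hQa_Y i) with h' | h'
          · exact h1 h'
          · rw [h] at h'
            exact hyC' h'
        · rw [if_neg h1, if_neg h2] at h
          exact h
      -- the glued paths
      have hQbcons : ∀ i, Qb i = zb i :: (Qb i).tail := by
        intro i
        have hne := hQb_ne i
        have h := List.cons_head_tail hne
        have h2 := hQb_head i
        rw [List.head?_eq_head hne, Option.some_inj] at h2
        rw [← h2]
        exact h.symm
      set glue : Fin n → List E := fun i =>
        Qa i ++ (if ca i = x then Qb (jb i) else (Qb (jb i)).tail) with hglue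
      have hglue_ch : ∀ i, (glue i).Chain' (Rel S) := by
        intro i
        have hQaS : (Qa i).Chain' (Rel S) :=
          (hQa_ch i).imp (fun a b hab => Finset.mem_of_mem_erase hab)
        have hQbS : (Qb (jb i)).Chain' (Rel S) :=
          (hQb_ch (jb i)).imp (fun a b hab => Finset.mem_of_mem_erase hab)
        simp only [hglue]
        by_cases h : ca i = x
        · rw [if_pos h]
          refine hQaS.append hQbS ?_
          intro a ha b hb
          rw [hQa_last i] at ha
          have ha' : a = ca i := (by simpa using ha : ca i = a).symm
          rw [List.head?_eq_head (hQb_ne (jb i))] at hb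
          have hb' : b = (Qb (jb i)).head (hQb_ne (jb i)) := (by simpa using hb : _ = b).symm
          have hbz : b = zb (jb i) := by
            rw [hb']
            have h2 := hQb_head (jb i)
            rw [List.head?_eq_head (hQb_ne (jb i)), Option.some_inj] at h2
            exact h2
          rw [ha', h, hbz, hjb i, if_pos h]
          exact hxy
        · rw [if_neg h]
          have hch := hQb_ch (jb i)
          rw [hQbcons (jb i)] at hch
          obtain ⟨hhead, htail⟩ := List.isChain_cons.mp hch
          refine ((hQa_ch i).imp (fun a b hab => Finset.mem_of_mem_erase hab)).append
            (htail.imp (fun a b hab => Finset.mem_of_mem_erase hab)) ?_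
          intro a ha b hb
          rw [hQa_last i] at ha
          have ha' : a = ca i := (by simpa using ha : ca i = a).symm
          have hzrel : Rel (S.erase (x, y)) (zb (jb i)) b := hhead b hb
          have : zb (jb i) = ca i := by rw [hjb i, if_neg h]
          rw [ha', ← this]
          exact Finset.mem_of_mem_erase hzrel
      have hglue_ne : ∀ i, glue i ≠ [] := by
        intro i
        simp only [hglue]
        intro hcontra
        exact hQa_ne i (List.append_eq_nil_iff.mp hcontra).1
      have hglue_head : ∀ i, (glue i).head? = (Qa i).head? := by
        intro i
        simp only [hglue]
        rw [List.head?_append, List.head?_eq_head (hQa_ne i), Option.some_or]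
      have hglue_last : ∀ i, ∃ c0, (glue i).getLast? = some c0 ∧ c0 ∈ B := by
        intro i
        obtain ⟨c0, hc0, hc0B⟩ := hQb_B (jb i)
        by_cases h : ca i = x
        · refine ⟨c0, ?_, hc0B⟩
          simp only [hglue]
          rw [if_pos h, List.getLast?_append, hc0, Option.some_or]
        · rcases htt : (Qb (jb i)).tail with _ | ⟨b0, t0⟩
          · have hQbj : Qb (jb i) = [zb (jb i)] := by rw [hQbcons (jb i), htt]
            have hc0z : c0 = zb (jb i) := by
              rw [hQbj] at hc0
              simpa using hc0.symm
            refine ⟨ca i, ?_, ?_⟩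
            · simp only [hglue]
              rw [if_neg h, htt, List.append_nil]
              exact hQa_last i
            · have : zb (jb i) = ca i := by rw [hjb i, if_neg h]
              rw [← this, ← hc0z]
              exact hc0B
          · refine ⟨c0, ?_, hc0B⟩
            simp only [hglue]
            rw [if_neg h]
            have hc0' : ((Qb (jb i)).tail).getLast? = some c0 := by
              rw [hQbcons (jb i), htt, List.getLast?_cons_cons] at hc0
              rw [htt]
              exact hc0
            rw [List.getLast?_append, hc0', Option.some_or]
      have hglue_disj : ∀ i j, i ≠ j → ∀ e, e ∈ glue i → e ∉ glue j := by
        intro i j hij e hei hej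
        have hsub : ∀ k (e' : E), e' ∈ glue k → e' ∈ Qa k ∨ e' ∈ Qb (jb k) := by
          intro k e' he'
          simp only [hglue] at he'
          rcases List.mem_append.mp he' with h | h
          · exact Or.inl h
          · right
            by_cases hk : ca k = x
            · rwa [if_pos hk] at h
            · rw [if_neg hk] at h
              exact List.mem_of_mem_tail h
        have hcross_pq : ∀ k l : Fin n, e ∈ Qa k → e ∈ Qb (jb l) → e = ca k ∧ e = zb (jb l) := by
          intro k l h1 h2
          exact cross hrk hxy hxC' claimY claimZ (hQa_ch k) (hQa_A k) (hQa_last k)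
            (hQa_Y k) (hQa_dl k) (hQb_ch (jb l)) (hQb_head (jb l)) (hQb_B (jb l))
            (hQb_tl (jb l)) h1 h2
        rcases hsub i e hei with h1 | h1 <;> rcases hsub j e hej with h2 | h2
        · exact hQa_disj i j hij e h1 h2
        · obtain ⟨hec, hez⟩ := hcross_pq i j h1 h2
          have hcc : ca i = (if ca j = x then y else ca j) := by rw [← hec, hez, hjb j]
          by_cases hj : ca j = x
          · rw [if_pos hj] at hcc
            rcases Finset.mem_insert.mp (hQa_Y i) with h' | h'
            · exact hxny (by rw [← hcc, h'])
            · exact hyC' (hcc ▸ h')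
          · rw [if_neg hj] at hcc
            exact hij (hca_inj hcc)
        · obtain ⟨hec, hez⟩ := hcross_pq j i h2 h1
          have hcc : ca j = (if ca i = x then y else ca i) := by rw [← hec, hez, hjb i]
          by_cases hi : ca i = x
          · rw [if_pos hi] at hcc
            rcases Finset.mem_insert.mp (hQa_Y j) with h' | h'
            · exact hxny (by rw [← hcc, h'])
            · exact hyC' (hcc ▸ h')
          · rw [if_neg hi] at hcc
            exact hij (hca_inj hcc).symm
        · exact hQb_disj (jb i) (jb j) (fun hh => hij (hjb_inj hh)) e h1 h2
      refine ⟨glue, fun i => ⟨⟨hglue_ne i, hglue_ch i, ?_⟩, hglue_last i⟩, hglue_disj⟩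
      rw [hglue_head i]
      exact hQa_A i

end MengerAux

/-- For any nonempty collection `ξ' ⊆ E` there exist
`l = min{ω, C_{ξ'}}` channel-disjoint paths from the source to `ξ'`, and the set `ξ`
of last channels of these paths satisfies `ξ ⊆ ξ'` and `C_ξ = |ξ| = l`. -/
theorem statement15 {V E : Type*} [Fintype V] [Fintype E] [DecidableEq V] [DecidableEq E]
    (N : Network V E) (ω : ℕ) (hω : 1 ≤ ω) (ξ' : Finset E) (hξ' : ξ'.Nonempty) :
    ∃ (P : Fin (min ω (N.minCutChans ξ')) → List E)
      (last : Fin (min ω (N.minCutChans ξ')) → E),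
      (∀ i, N.PathFrom (P i) N.s ∧ (P i).getLast? = some (last i) ∧ last i ∈ ξ') ∧
      (∀ i j, i ≠ j → ∀ e, e ∈ P i → e ∉ P j) ∧
      Finset.image last Finset.univ ⊆ ξ' ∧
      (Finset.image last Finset.univ).card = min ω (N.minCutChans ξ') ∧
      N.minCutChans (Finset.image last Finset.univ) = min ω (N.minCutChans ξ') := by
    classical
  set S : Finset (E × E) := Finset.univ.filter (fun p : E × E => N.head p.1 = N.tail p.2) with hS
  have hrkS : ∀ p ∈ S, N.rk p.1 < N.rk p.2 := by
    intro p hp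
    exact N.acyclic _ _ (Finset.mem_filter.mp hp).2
  have hrel : ∀ a b : E, MengerAux.Rel S a b ↔ N.head a = N.tail b := by
    intro a b
    simp [MengerAux.Rel, hS]
  have hpath : ∀ p : List E,
      MengerAux.APath S (fun e => N.tail e = N.s) p ↔ N.PathFrom p N.s := by
    intro p
    constructor
    · rintro ⟨h1, h2, h3⟩
      exact ⟨⟨h1, h2.imp (fun a b hab => (hrel a b).mp hab)⟩, h3⟩
    · rintro ⟨⟨h1, h2⟩, h3⟩
      exact ⟨h1, h2.imp (fun a b hab => (hrel a b).mpr hab), h3⟩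
  have hcut : ∀ (C ξ0 : Finset E),
      MengerAux.IsCut S (fun e => N.tail e = N.s) ξ0 C ↔ N.IsCutChans C ξ0 := by
    intro C ξ0
    constructor
    · intro h p hp hB
      exact h p ((hpath p).mpr hp) hB
    · intro h p hp hB
      exact h p ((hpath p).mp hp) hB
  have hn : ∀ C : Finset E,
      MengerAux.IsCut S (fun e => N.tail e = N.s) ξ' C → N.minCutChans ξ' ≤ C.card := by
    intro C hC
    exact Nat.sInf_le ⟨C, (hcut C ξ').mp hC, rfl⟩
  obtain ⟨P0, hP01, hP02⟩ :=
    MengerAux.menger N.rk S hrkS (fun e => N.tail e = N.s) ξ' (N.minCutChans ξ') hn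
  set l := min ω (N.minCutChans ξ') with hl
  have hln : l ≤ N.minCutChans ξ' := min_le_right _ _
  set P : Fin l → List E := fun i => P0 (Fin.castLE hln i) with hP
  have hcast_inj : ∀ i j : Fin l, i ≠ j → (Fin.castLE hln i) ≠ (Fin.castLE hln j) := by
    intro i j hij h
    exact hij (Fin.castLE_injective hln h)
  choose lastf hlast1 hlast2 using fun i : Fin l => (hP01 (Fin.castLE hln i)).2
  have hlast_mem : ∀ i, lastf i ∈ P i := fun i => MengerAux.mem_of_last _ _ (hlast1 i)
  have hdisj : ∀ i j : Fin l, i ≠ j → ∀ e, e ∈ P i → e ∉ P j :=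
    fun i j hij e hei hej => hP02 _ _ (hcast_inj i j hij) e hei hej
  have hlast_inj : Function.Injective lastf := by
    intro i j hij
    by_contra hne
    exact hdisj i j hne (lastf i) (hlast_mem i) (hij ▸ hlast_mem j)
  have hcard : (Finset.image lastf Finset.univ).card = l := by
    rw [Finset.card_image_of_injective _ hlast_inj, Finset.card_univ, Fintype.card_fin]
  have hsub : Finset.image lastf Finset.univ ⊆ ξ' := by
    intro w hw
    obtain ⟨i, -, rfl⟩ := Finset.mem_image.mp hw
    exact hlast2 i
  refine ⟨P, lastf, fun i => ⟨(hpath _).mp (hP01 _).1, hlast1 i, hlast2 i⟩, hdisj, hsub, hcard, ?_⟩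
  set ξ := Finset.image lastf Finset.univ with hξ
  have hcutself : N.IsCutChans ξ ξ := by
    intro p hp hB
    obtain ⟨e, he, heξ⟩ := hB
    exact ⟨e, MengerAux.mem_of_last p e he, heξ⟩
  have hle : N.minCutChans ξ ≤ l := by
    have hmem : ξ.card ∈ {m | ∃ C : Finset E, N.IsCutChans C ξ ∧ C.card = m} :=
      ⟨ξ, hcutself, rfl⟩
    have h : N.minCutChans ξ ≤ ξ.card := Nat.sInf_le hmem
    rw [hcard] at h
    exact h
  have hge : l ≤ N.minCutChans ξ := by
    rw [Network.minCutChans]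
    apply le_csInf
    · exact ⟨ξ.card, ξ, hcutself, rfl⟩
    · rintro m ⟨C, hC, rfl⟩
      have hhit : ∀ i : Fin l, ∃ e ∈ P i, e ∈ C := by
        intro i
        apply hC (P i) ((hpath _).mp (hP01 _).1)
        exact ⟨lastf i, by rw [hlast1 i]; rfl,
          Finset.mem_image.mpr ⟨i, Finset.mem_univ i, rfl⟩⟩
      choose g hg1 hg2 using hhit
      have hginj : Function.Injective g := by
        intro i j hij
        by_contra hne
        exact hdisj i j hne (g i) (hg1 i) (hij ▸ hg1 j)
      calc l = (Finset.univ : Finset (Fin l)).card := by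
              rw [Finset.card_univ, Fintype.card_fin]
        _ ≤ C.card := Finset.card_le_card_of_injOn g (fun i _ => hg2 i) (fun a _ b _ h => hginj h)
  exact le_antisymm hle hge
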